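/- Let U(y) = (1 + |y|²/24)⁻² on ℝ⁶. Then there exist C > 0 and r₀ > 0 such that for all r ≥ r₀: | ∫_{{y ∈ ℝ⁶ : |y| > r}} U(y)² dy − (24⁴/2) π³ r⁻² | ≤ C r⁻⁴. -/

import Mathlib

open MeasureTheory

noncomputable section

/-- `ℝ⁶` as a Euclidean space. -/
abbrev E6 : Type := EuclideanSpace ℝ (Fin 6)

/-- The Aubin–Talenti bubble on `ℝ⁶`: `U(y) = (1 + |y|²/24)⁻²`. -/
def Ubub (y : E6) : ℝ := ((1 + ‖y‖ ^ 2 / 24) ^ 2)⁻¹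

open Set Filter in
private noncomputable def Gaux (t : ℝ) : ℝ :=
  -6912 * ((1 + t ^ 2 / 24)⁻¹ - ((1 + t ^ 2 / 24) ^ 2)⁻¹ + ((1 + t ^ 2 / 24) ^ 3)⁻¹ / 3)

private lemma Gaux_deriv (t : ℝ) :
    HasDerivAt Gaux (t ^ 5 * (((1 + t ^ 2 / 24) ^ 2)⁻¹) ^ 2) t := by
  have hne : (1 + t ^ 2 / 24) ≠ 0 := by positivity
  have hs : HasDerivAt (fun t : ℝ => 1 + t ^ 2 / 24) (t / 12) t := by
    have : HasDerivAt (fun t : ℝ => 1 + t ^ 2 / 24) (0 + 2 * t / 24) t := by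
      simpa using ((hasDerivAt_pow 2 t).div_const 24).const_add 1
    convert this using 1; ring
  have h1 : HasDerivAt (fun t : ℝ => (1 + t ^ 2 / 24)⁻¹)
      (-(t / 12) / (1 + t ^ 2 / 24) ^ 2) t := hs.inv hne
  have h2 : HasDerivAt (fun t : ℝ => ((1 + t ^ 2 / 24) ^ 2)⁻¹)
      (-(2 * (1 + t ^ 2 / 24) ^ 1 * (t / 12)) / ((1 + t ^ 2 / 24) ^ 2) ^ 2) t :=
    (hs.pow 2).inv (pow_ne_zero _ hne)
  have h3 : HasDerivAt (fun t : ℝ => ((1 + t ^ 2 / 24) ^ 3)⁻¹)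
      (-(3 * (1 + t ^ 2 / 24) ^ 2 * (t / 12)) / ((1 + t ^ 2 / 24) ^ 3) ^ 2) t :=
    (hs.pow 3).inv (pow_ne_zero _ hne)
  have := (((h1.sub h2).add (h3.div_const 3)).const_mul (-6912 : ℝ))
  convert this using 1
  · rfl
  · rfl
  · rfl
  field_simp
  ring

open Filter in
private lemma Gaux_tendsto : Tendsto Gaux atTop (nhds 0) := by
  have hs : Tendsto (fun t : ℝ => 1 + t ^ 2 / 24) atTop atTop := by
    apply tendsto_atTop_add_const_left
    exact (tendsto_pow_atTop (by norm_num)).atTop_div_const (by norm_num)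
  have h1 : Tendsto (fun t : ℝ => (1 + t ^ 2 / 24)⁻¹) atTop (nhds 0) :=
    hs.inv_tendsto_atTop
  have h2 : Tendsto (fun t : ℝ => ((1 + t ^ 2 / 24) ^ 2)⁻¹) atTop (nhds 0) :=
    ((tendsto_pow_atTop (by norm_num)).comp hs).inv_tendsto_atTop
  have h3 : Tendsto (fun t : ℝ => ((1 + t ^ 2 / 24) ^ 3)⁻¹) atTop (nhds 0) :=
    ((tendsto_pow_atTop (by norm_num)).comp hs).inv_tendsto_atTop
  have := (((h1.sub h2).add (h3.div_const 3)).const_mul (-6912 : ℝ))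
  have h0 : Tendsto (fun k : ℝ => -(6912 * ((1 + k ^ 2 / 24)⁻¹ - ((1 + k ^ 2 / 24) ^ 2)⁻¹
      + ((1 + k ^ 2 / 24) ^ 3)⁻¹ / 3))) atTop (nhds 0) := by simpa using this
  convert h0 using 2 with t
  simp [Gaux]

open Set in
private lemma oneD_integral (r : ℝ) (hr : 0 < r) :
    ∫ t in Ioi r, t ^ 5 * (((1 + t ^ 2 / 24) ^ 2)⁻¹) ^ 2 = -Gaux r := by
  have h := integral_Ioi_of_hasDerivAt_of_nonneg' (a := r)
      (g := Gaux) (g' := fun t => t ^ 5 * (((1 + t ^ 2 / 24) ^ 2)⁻¹) ^ 2)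
      (fun x _ => Gaux_deriv x) ?_ Gaux_tendsto
  · rw [h]; ring
  · intro x hx
    have hx0 : 0 < x := hr.trans hx
    positivity

private lemma vol_ball_E6 : (volume (Metric.ball (0 : E6) 1)).toReal = Real.pi ^ 3 / 6 := by
  rw [EuclideanSpace.volume_ball]
  have hΓ : Real.Gamma ((Fintype.card (Fin 6) : ℝ) / 2 + 1) = 6 := by
    rw [show ((Fintype.card (Fin 6) : ℝ) / 2 + 1) = (3 : ℕ) + 1 by simp; norm_num,
      Real.Gamma_nat_eq_factorial]
    norm_num [Nat.factorial]
  rw [hΓ]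
  have hπ : Real.sqrt Real.pi ^ Fintype.card (Fin 6) = Real.pi ^ 3 := by
    rw [show Fintype.card (Fin 6) = 6 by simp, show (6:ℕ) = 2*3 by norm_num, pow_mul,
      Real.sq_sqrt Real.pi_pos.le]
  rw [hπ]
  simp [ENNReal.toReal_ofReal (by positivity : (0:ℝ) ≤ Real.pi ^ 3 / 6)]

private lemma dim_E6 : Module.finrank ℝ E6 = 6 := by simp [finrank_euclideanSpace]

open Set in
private lemma tail_eq (r : ℝ) (hr : 0 < r) :
    ∫ y in {y : E6 | r < ‖y‖}, (Ubub y) ^ 2 = Real.pi ^ 3 * (-Gaux r) := by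
  have hmeas : MeasurableSet {y : E6 | r < ‖y‖} :=
    measurableSet_lt measurable_const measurable_norm
  have h1 : ∫ y in {y : E6 | r < ‖y‖}, (Ubub y) ^ 2
      = ∫ y : E6, Set.indicator (Ioi r) (fun t => (((1 + t ^ 2 / 24) ^ 2)⁻¹) ^ 2) ‖y‖ := by
    have heq : Set.indicator {y : E6 | r < ‖y‖} (fun y => (Ubub y) ^ 2)
        = fun y => Set.indicator (Ioi r) (fun t => (((1 + t ^ 2 / 24) ^ 2)⁻¹) ^ 2) ‖y‖ := by
      funext y
      by_cases hy : r < ‖y‖ <;> simp [Set.indicator, hy, Ubub]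
    rw [← integral_indicator hmeas, heq]
  rw [h1, integral_fun_norm_addHaar volume
    (Set.indicator (Ioi r) (fun t => (((1 + t ^ 2 / 24) ^ 2)⁻¹) ^ 2)), dim_E6, measureReal_def, vol_ball_E6]
  have h2 : ∫ t in Ioi (0:ℝ), t ^ (6-1) •
      Set.indicator (Ioi r) (fun t => (((1 + t ^ 2 / 24) ^ 2)⁻¹) ^ 2) t
      = ∫ t in Ioi r, t ^ 5 * (((1 + t ^ 2 / 24) ^ 2)⁻¹) ^ 2 := by
    have : ∀ t : ℝ, t ^ (6-1) •
        Set.indicator (Ioi r) (fun t => (((1 + t ^ 2 / 24) ^ 2)⁻¹) ^ 2) t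
        = Set.indicator (Ioi r) (fun t => t ^ 5 * (((1 + t ^ 2 / 24) ^ 2)⁻¹) ^ 2) t := by
      intro t
      by_cases ht : t ∈ Ioi r <;> simp [Set.indicator, ht]
    simp_rw [this]
    rw [setIntegral_indicator measurableSet_Ioi, Set.Ioi_inter_Ioi, max_eq_right hr.le]
  rw [h2, oneD_integral r hr]
  simp only [smul_eq_mul, nsmul_eq_mul]
  ring

/-- the tail integral of `U²` outside the ball of radius `r` equals
`(24⁴/2) π³ r⁻²` up to an error `O(r⁻⁴)`. -/
theorem tail_integral_U_sq :
    ∃ C > 0, ∃ r₀ > 0, ∀ r ≥ r₀,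
      |(∫ y in {y : E6 | r < ‖y‖}, (Ubub y) ^ 2) - (24 ^ 4 / 2) * Real.pi ^ 3 / r ^ 2|
        ≤ C / r ^ 4 := by
  refine ⟨31850496 * Real.pi ^ 3, by positivity, 12, by norm_num, fun r hr => ?_⟩
  have hr0 : (0:ℝ) < r := by linarith
  have hs0 : (0:ℝ) < 1 + r ^ 2 / 24 := by positivity
  rw [tail_eq r hr0]
  have hid : Real.pi ^ 3 * (-Gaux r) - (24 ^ 4 / 2) * Real.pi ^ 3 / r ^ 2
      = -(6912 * Real.pi ^ 3 * (72 + 8 * r ^ 2 + r ^ 4 / 4)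
          / (3 * (1 + r ^ 2 / 24) ^ 3 * r ^ 2)) := by
    simp only [Gaux]
    field_simp
    ring
  rw [hid, abs_neg, abs_of_nonneg (by positivity)]
  rw [div_le_div_iff₀ (by positivity) (by positivity)]
  have P : (72 + 8 * r ^ 2 + r ^ 4 / 4) * r ^ 4
      ≤ 4608 * (3 * (1 + r ^ 2 / 24) ^ 3 * r ^ 2) := by
    nlinarith [sq_nonneg r, sq_nonneg (r ^ 2), sq_nonneg (r ^ 3), sq_nonneg (r ^ 4),
      pow_nonneg hr0.le 6, pow_nonneg hr0.le 8]
  calc 6912 * Real.pi ^ 3 * (72 + 8 * r ^ 2 + r ^ 4 / 4) * r ^ 4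
      = 6912 * Real.pi ^ 3 * ((72 + 8 * r ^ 2 + r ^ 4 / 4) * r ^ 4) := by ring
    _ ≤ 6912 * Real.pi ^ 3 * (4608 * (3 * (1 + r ^ 2 / 24) ^ 3 * r ^ 2)) :=
        mul_le_mul_of_nonneg_left P (by positivity)
    _ = 31850496 * Real.pi ^ 3 * (3 * (1 + r ^ 2 / 24) ^ 3 * r ^ 2) := by ring
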